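/- Let X ⊂ ℝⁿ be a regular convex set, f : int X → ℝ a C³ projectively self-concordant barrier with parameter γ = (ν−2)/√(ν−1), ν ≥ 2, and x ∈ int X. Define σ_x(h) = inf{ 1/t : t > 0, x + th ∈ X }. Then for every h ∈ ℝⁿ: max(0, f'(x)[h] + √(G(x)[h,h]/(ν−1))) ≤ σ_x(h) ≤ max(0, f'(x)[h] + √((ν−1)·G(x)[h,h])), where G(x) = f''(x) − f'(x)f'(x)ᵀ. -/

import Mathlib

open Filter

variable {E : Type*} [NormedAddCommGroup E] [NormedSpace ℝ E]

/-- A regular convex set: closed, convex, with nonempty interior, containing no lines. -/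
def IsRegularConvex (X : Set E) : Prop :=
  IsClosed X ∧ Convex ℝ X ∧ (interior X).Nonempty ∧
    ∀ x d : E, d ≠ 0 → ¬ (∀ t : ℝ, x + t • d ∈ X)

/-- Affine metric `G(x)[h,h] = f''(x)[h,h] - (f'(x)[h])²`. -/
noncomputable def affMetric (f : E → ℝ) (x h : E) : ℝ :=
  iteratedFDeriv ℝ 2 f x (fun _ => h) - (fderiv ℝ f x h)^2

/-- Cubic form `C(x)[h,h,h]`. -/
noncomputable def cubicForm (f : E → ℝ) (x h : E) : ℝ :=
  iteratedFDeriv ℝ 3 f x (fun _ => h)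
    - 6 * iteratedFDeriv ℝ 2 f x (fun _ => h) * fderiv ℝ f x h
    + 4 * (fderiv ℝ f x h)^3

/-- Projectively self-concordant barrier with parameter γ on X. -/
def IsPSCBarrier (X : Set E) (f : E → ℝ) (γ : ℝ) : Prop :=
  ContDiffOn ℝ 3 f (interior X) ∧
  (∀ x ∈ interior X, ∀ h : E, h ≠ 0 → 0 < affMetric f x h) ∧
  (∀ x ∈ frontier X, Tendsto f (nhdsWithin x (interior X)) atTop) ∧
  (∀ x ∈ interior X, ∀ h : E, |cubicForm f x h| ≤ 2 * γ * (affMetric f x h) ^ ((3:ℝ)/2))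

/-- `σ_x(h) = inf { 1/t : t > 0, x + t•h ∈ X }`. -/
noncomputable def sigmaDist (X : Set E) (x h : E) : ℝ :=
  sInf {r : ℝ | ∃ t : ℝ, 0 < t ∧ x + t • h ∈ X ∧ r = 1/t}



lemma myMono {g g' : ℝ → ℝ} {α β : ℝ} (hab : α ≤ β)
    (hd : ∀ t ∈ Set.Icc α β, HasDerivAt g (g' t) t)
    (h0 : ∀ t ∈ Set.Icc α β, 0 ≤ g' t) : g α ≤ g β := by
  have hmono : MonotoneOn g (Set.Icc α β) := by
    apply monotoneOn_of_deriv_nonneg (convex_Icc α β)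
      (fun t ht => (hd t ht).continuousAt.continuousWithinAt)
    · intro t ht
      rw [interior_Icc] at ht
      exact (hd t (Set.Ioo_subset_Icc_self ht)).differentiableAt.differentiableWithinAt
    · intro t ht
      rw [interior_Icc] at ht
      have ht' := Set.Ioo_subset_Icc_self ht
      rw [(hd t ht').deriv]
      exact h0 t ht'
  exact hmono (Set.left_mem_Icc.mpr hab) (Set.right_mem_Icc.mpr hab) hab

lemma sqrt_cube {g : ℝ} (hg : 0 ≤ g) : g ^ ((3:ℝ)/2) = Real.sqrt g ^ 3 := by
  rw [Real.sqrt_eq_rpow, ← Real.rpow_natCast (g ^ ((1:ℝ)/2)) 3, ← Real.rpow_mul hg]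
  norm_num

lemma ineq_low {ν p A B G : ℝ} (hν : 2 ≤ ν) (hG : 0 < G) (hGdef : G = A - p^2)
    (hpsc : |B - 6*A*p + 4*p^3| ≤ 2 * ((ν-2)/Real.sqrt (ν-1)) * G ^ ((3:ℝ)/2)) :
    (p + (Real.sqrt (ν-1))⁻¹ * Real.sqrt G)^2 ≤
      A + (Real.sqrt (ν-1))⁻¹ * ((B - 2*p*A) / (2*Real.sqrt G)) := by
  set b := Real.sqrt (ν-1) with hbdef
  have hb : 0 < b := Real.sqrt_pos.mpr (by linarith)
  have hb2 : b^2 = ν - 1 := Real.sq_sqrt (by linarith)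
  set V := Real.sqrt G with hVdef
  have hV : 0 < V := Real.sqrt_pos.mpr hG
  have hV2 : V^2 = G := Real.sq_sqrt hG.le
  rw [sqrt_cube hG.le] at hpsc
  set γ := (ν-2)/b with hγdef
  have hC := (abs_le.mp hpsc).1
  have hBA : B - 2*p*A = (B - 6*A*p + 4*p^3) + 4*p*V^2 := by
    rw [hV2, hGdef]; ring
  have hquot : 2*p*V - γ*V^2 ≤ (B - 2*p*A) / (2*V) := by
    rw [hBA]
    have h1 : (-(2*γ*V^3) + 4*p*V^2) / (2*V) ≤ ((B - 6*A*p + 4*p^3) + 4*p*V^2) / (2*V) :=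
      (div_le_div_iff_of_pos_right (by positivity)).mpr (by linarith)
    calc 2*p*V - γ*V^2 = (-(2*γ*V^3) + 4*p*V^2) / (2*V) := by
          field_simp; ring
      _ ≤ _ := h1
  have hbne : b ≠ 0 := ne_of_gt hb
  have hγb : γ * b = ν - 2 := by
    rw [hγdef]; field_simp
  have hid : (b⁻¹)^2 + γ * b⁻¹ = 1 := by
    field_simp
    nlinarith [hb2, hγb]
  have hmul : b⁻¹ * (2*p*V - γ*V^2) ≤ b⁻¹ * ((B - 2*p*A)/(2*V)) :=
    mul_le_mul_of_nonneg_left hquot (inv_nonneg.mpr hb.le)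
  have hA : A = V^2 + p^2 := by rw [hV2]; linarith [hGdef]
  have hid2 : ((b⁻¹)^2 + γ * b⁻¹) * V^2 = V^2 := by rw [hid, one_mul]
  nlinarith [hmul, hid2, hA]

lemma ineq_up {ν p A B G : ℝ} (hν : 2 ≤ ν) (hG : 0 < G) (hGdef : G = A - p^2)
    (hpsc : |B - 6*A*p + 4*p^3| ≤ 2 * ((ν-2)/Real.sqrt (ν-1)) * G ^ ((3:ℝ)/2)) :
    A + (Real.sqrt (ν-1)) * ((B - 2*p*A) / (2*Real.sqrt G)) ≤
      (p + (Real.sqrt (ν-1)) * Real.sqrt G)^2 := by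
  set b := Real.sqrt (ν-1) with hbdef
  have hb : 0 < b := Real.sqrt_pos.mpr (by linarith)
  have hb2 : b^2 = ν - 1 := Real.sq_sqrt (by linarith)
  set V := Real.sqrt G with hVdef
  have hV : 0 < V := Real.sqrt_pos.mpr hG
  have hV2 : V^2 = G := Real.sq_sqrt hG.le
  rw [sqrt_cube hG.le] at hpsc
  set γ := (ν-2)/b with hγdef
  have hC := (abs_le.mp hpsc).2
  have hBA : B - 2*p*A = (B - 6*A*p + 4*p^3) + 4*p*V^2 := by
    rw [hV2, hGdef]; ring
  have hquot : (B - 2*p*A) / (2*V) ≤ 2*p*V + γ*V^2 := by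
    rw [hBA]
    have h1 : ((B - 6*A*p + 4*p^3) + 4*p*V^2) / (2*V) ≤ (2*γ*V^3 + 4*p*V^2) / (2*V) :=
      (div_le_div_iff_of_pos_right (by positivity)).mpr (by linarith)
    calc ((B - 6*A*p + 4*p^3) + 4*p*V^2) / (2*V) ≤ (2*γ*V^3 + 4*p*V^2) / (2*V) := h1
      _ = 2*p*V + γ*V^2 := by field_simp; ring
  have hbne : b ≠ 0 := ne_of_gt hb
  have hγb : γ * b = ν - 2 := by rw [hγdef]; field_simp
  have hid : b^2 = 1 + γ * b := by rw [hγb, hb2]; ring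
  have hmul : b * ((B - 2*p*A)/(2*V)) ≤ b * (2*p*V + γ*V^2) :=
    mul_le_mul_of_nonneg_left hquot hb.le
  have hA : A = V^2 + p^2 := by rw [hV2]; linarith [hGdef]
  have hid2 : b^2 * V^2 = (1 + γ * b) * V^2 := by rw [hid]
  nlinarith [hmul, hid2, hA]

lemma riccati_lower {T : ℝ} (hT : 0 < T) {F F' : ℝ → ℝ}
    (hd : ∀ t ∈ Set.Ico 0 T, HasDerivAt F (F' t) t)
    (hsq : ∀ t ∈ Set.Ico 0 T, (F t)^2 ≤ F' t) : F 0 ≤ 1/T := by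
  by_contra hc
  push_neg at hc
  have hc0 : 0 < F 0 := lt_trans (by positivity) hc
  have hsub : ∀ β ∈ Set.Ico 0 T, Set.Icc 0 β ⊆ Set.Ico 0 T :=
    fun β hβ u hu => ⟨hu.1, lt_of_le_of_lt hu.2 hβ.2⟩
  have hFmono : ∀ β ∈ Set.Ico 0 T, F 0 ≤ F β := fun β hβ =>
    myMono hβ.1 (fun u hu => hd u (hsub β hβ hu))
      (fun u hu => le_trans (sq_nonneg _) (hsq u (hsub β hβ hu)))
  have hFpos : ∀ β ∈ Set.Ico 0 T, 0 < F β := fun β hβ => lt_of_lt_of_le hc0 (hFmono β hβ)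
  have key : ∀ β ∈ Set.Ico 0 T, β < 1 / F 0 := by
    intro β hβ
    have hJ : -((0:ℝ) + (F 0)⁻¹) ≤ -(β + (F β)⁻¹) := by
      apply myMono (g := fun u => -(u + (F u)⁻¹))
        (g' := fun u => -(1 + -F' u / (F u)^2)) hβ.1
      · intro u hu
        exact ((hasDerivAt_id u).add ((hd u (hsub β hβ hu)).inv
          (ne_of_gt (hFpos u (hsub β hβ hu))))).neg
      · intro u hu
        have hu' := hsub β hβ hu
        have hp := hFpos u hu'
        have h1 : 1 ≤ F' u / (F u)^2 := (one_le_div (by positivity)).mpr (hsq u hu')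
        have h2 : -F' u / (F u)^2 = -(F' u / (F u)^2) := by ring
        rw [h2]; linarith
    have hFβ := hFpos β hβ
    have h3 : β + (F β)⁻¹ ≤ (F 0)⁻¹ := by linarith
    have h4 : β < (F 0)⁻¹ := lt_of_lt_of_le (lt_add_of_pos_right β (inv_pos.mpr hFβ)) h3
    simpa [one_div] using h4
  have h1T : 1 / F 0 < T := by
    rw [div_lt_iff₀ hc0]
    have := (div_lt_iff₀ hT).mp hc
    linarith
  exact absurd (key (1/F 0) ⟨by positivity, h1T⟩) (lt_irrefl _)

lemma riccati_upper {T : ℝ} (hT : 0 < T) {F F' : ℝ → ℝ}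
    (hd : ∀ t ∈ Set.Ico 0 T, HasDerivAt F (F' t) t)
    (hsq : ∀ t ∈ Set.Ico 0 T, F' t ≤ (F t)^2)
    (hub : ∀ M : ℝ, ∀ t₀ ∈ Set.Ico 0 T, ∃ t, t ∈ Set.Ico 0 T ∧ t₀ ≤ t ∧ M ≤ F t) :
    1/T ≤ F 0 := by
  have hJ : ∀ α β : ℝ, α ≤ β → Set.Icc α β ⊆ Set.Ico 0 T →
      (∀ u ∈ Set.Icc α β, 0 < F u) → α + (F α)⁻¹ ≤ β + (F β)⁻¹ := by
    intro α β hab hsubs hFpos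
    apply myMono (g := fun u => u + (F u)⁻¹) (g' := fun u => 1 + -F' u / (F u)^2) hab
    · intro u hu
      exact (hasDerivAt_id u).add ((hd u (hsubs hu)).inv (ne_of_gt (hFpos u hu)))
    · intro u hu
      have hp := hFpos u hu
      have h1 : F' u / (F u)^2 ≤ 1 := (div_le_one (by positivity)).mpr (hsq u (hsubs hu))
      have h2 : -F' u / (F u)^2 = -(F' u / (F u)^2) := by ring
      rw [h2]; linarith
  have hpos : ∀ t₀ ∈ Set.Ico 0 T, 0 < F t₀ := by
    intro t₀ ht₀
    by_contra hng
    push_neg at hng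
    obtain ⟨t₂, ht₂, ht₀₂, hFt₂⟩ := hub 1 t₀ ht₀
    have hlt : t₀ < t₂ := lt_of_le_of_ne ht₀₂ (fun he => by rw [he] at hng; linarith)
    set K := {u | u ∈ Set.Icc t₀ t₂ ∧ F u ≤ 0} with hK
    have hKne : K.Nonempty := ⟨t₀, ⟨le_rfl, ht₀₂⟩, hng⟩
    have hKbdd : BddAbove K := ⟨t₂, fun u hu => hu.1.2⟩
    set s₀ := sSup K with hs₀
    have hs₀mem : s₀ ∈ Set.Icc t₀ t₂ :=
      ⟨le_csSup hKbdd ⟨⟨le_rfl, ht₀₂⟩, hng⟩, csSup_le hKne (fun u hu => hu.1.2)⟩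
    have hIcoIcc : Set.Icc t₀ t₂ ⊆ Set.Ico 0 T :=
      fun u hu => ⟨le_trans ht₀.1 hu.1, lt_of_le_of_lt hu.2 ht₂.2⟩
    have hcontF : ∀ u ∈ Set.Icc t₀ t₂, ContinuousAt F u :=
      fun u hu => (hd u (hIcoIcc hu)).continuousAt
    have hFs₀ : F s₀ ≤ 0 := by
      have hcl : s₀ ∈ closure K := csSup_mem_closure hKne hKbdd
      haveI : (nhdsWithin s₀ K).NeBot := mem_closure_iff_nhdsWithin_neBot.mp hcl
      refine le_of_tendsto ((hcontF s₀ hs₀mem).tendsto.mono_left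
        (nhdsWithin_le_nhds (s := K))) ?_
      exact Filter.eventually_of_mem self_mem_nhdsWithin (fun u hu => hu.2)
    have hs₀lt : s₀ < t₂ := lt_of_le_of_ne hs₀mem.2 (fun he => by rw [he] at hFs₀; linarith)
    have hFposIoc : ∀ u ∈ Set.Ioc s₀ t₂, 0 < F u := by
      intro u hu
      by_contra hng2
      push_neg at hng2
      have hmem : u ∈ K := ⟨⟨le_trans hs₀mem.1 hu.1.le, hu.2⟩, hng2⟩
      exact absurd (le_csSup hKbdd hmem) (not_le.mpr hu.1)
    have hlb : ∀ u ∈ Set.Ioc s₀ t₂, (t₂ + 1)⁻¹ ≤ F u := by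
      intro u hu
      have hu0 : 0 ≤ u := (hIcoIcc ⟨le_trans hs₀mem.1 hu.1.le, hu.2⟩).1
      have hJu := hJ u t₂ hu.2
        (fun v hv => hIcoIcc ⟨le_trans hs₀mem.1 (le_trans hu.1.le hv.1), hv.2⟩)
        (fun v hv => hFposIoc v ⟨lt_of_lt_of_le hu.1 hv.1, hv.2⟩)
      have hFt₂pos : 0 < F t₂ := lt_of_lt_of_le one_pos hFt₂
      have hF2 : (F t₂)⁻¹ ≤ 1 := by
        have := one_div_le_one_div_of_le one_pos hFt₂
        simpa [one_div] using this
      have hFu := hFposIoc u hu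
      have h1 : (F u)⁻¹ ≤ t₂ + 1 := by linarith
      have ht₂1 : (0:ℝ) < t₂ + 1 := by have := ht₂.1; linarith
      have h2 : 1 ≤ F u * (t₂ + 1) := by
        calc (1:ℝ) = F u * (F u)⁻¹ := (mul_inv_cancel₀ (ne_of_gt hFu)).symm
          _ ≤ F u * (t₂+1) := mul_le_mul_of_nonneg_left h1 hFu.le
      nlinarith [mul_inv_cancel₀ (ne_of_gt ht₂1), inv_nonneg.mpr ht₂1.le]
    have hge : (t₂+1)⁻¹ ≤ F s₀ := by
      haveI : (nhdsWithin s₀ (Set.Ioc s₀ t₂)).NeBot := by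
        apply mem_closure_iff_nhdsWithin_neBot.mp
        rw [closure_Ioc (ne_of_lt hs₀lt)]
        exact ⟨le_rfl, hs₀lt.le⟩
      exact ge_of_tendsto ((hcontF s₀ hs₀mem).tendsto.mono_left
        (nhdsWithin_le_nhds (s := Set.Ioc s₀ t₂)))
        (Filter.eventually_of_mem self_mem_nhdsWithin hlb)
    have ht₂0 : (0:ℝ) ≤ t₂ := ht₂.1
    have : (0:ℝ) < (t₂+1)⁻¹ := inv_pos.mpr (by linarith)
    linarith
  have hF0 : 0 < F 0 := hpos 0 ⟨le_rfl, hT⟩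
  have key : ∀ ε : ℝ, 0 < ε → (F 0)⁻¹ ≤ T + ε := by
    intro ε hε
    obtain ⟨t, htIco, -, hFt⟩ := hub (max 1 ε⁻¹) 0 ⟨le_rfl, hT⟩
    have hJt := hJ 0 t htIco.1 (fun v hv => ⟨hv.1, lt_of_le_of_lt hv.2 htIco.2⟩)
      (fun v hv => hpos v ⟨hv.1, lt_of_le_of_lt hv.2 htIco.2⟩)
    have h1 : (F t)⁻¹ ≤ ε := by
      have h2 : ε⁻¹ ≤ F t := le_trans (le_max_right _ _) hFt
      have := one_div_le_one_div_of_le (inv_pos.mpr hε) h2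
      simpa [one_div] using this
    linarith [htIco.2]
  have hinv : (F 0)⁻¹ ≤ T := by
    by_contra hgt
    push_neg at hgt
    have := key (((F 0)⁻¹ - T)/2) (by linarith)
    linarith
  have := one_div_le_one_div_of_le (inv_pos.mpr hF0) hinv
  simpa [one_div] using this

lemma pack {U : Set E} (hU : IsOpen U) {f : E → ℝ} (hfC : ContDiffOn ℝ 3 f U)
    (x h : E) {t : ℝ} (hmem : x + t • h ∈ U) :
    HasDerivAt (fun s : ℝ => f (x + s • h)) (fderiv ℝ f (x + t • h) h) t ∧
    HasDerivAt (fun s : ℝ => fderiv ℝ f (x + s • h) h)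
      (iteratedFDeriv ℝ 2 f (x + t • h) (fun _ => h)) t ∧
    HasDerivAt (fun s : ℝ => iteratedFDeriv ℝ 2 f (x + s • h) (fun _ => h))
      (iteratedFDeriv ℝ 3 f (x + t • h) (fun _ => h)) t := by
  have hline : ∀ s : ℝ, HasDerivAt (fun s : ℝ => x + s • h) h s := by
    intro s
    simpa using ((hasDerivAt_id s).smul_const h).const_add x
  have h1 : DifferentiableAt ℝ f (x + t • h) :=
    (hfC.differentiableOn (by norm_num)).differentiableAt (hU.mem_nhds hmem)
  have hφ : HasDerivAt (fun s : ℝ => f (x + s • h)) (fderiv ℝ f (x + t • h) h) t :=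
    h1.hasFDerivAt.comp_hasDerivAt t (hline t)
  have hD1 : ContDiffOn ℝ 2 (fderiv ℝ f) U := hfC.fderiv_of_isOpen hU (by norm_num)
  have hD1d : DifferentiableAt ℝ (fderiv ℝ f) (x + t • h) :=
    (hD1.differentiableOn (by norm_num)).differentiableAt (hU.mem_nhds hmem)
  have hp' : HasDerivAt (fun s : ℝ => fderiv ℝ f (x + s • h))
      (fderiv ℝ (fderiv ℝ f) (x + t • h) h) t :=
    hD1d.hasFDerivAt.comp_hasDerivAt t (hline t)
  have hp : HasDerivAt (fun s : ℝ => fderiv ℝ f (x + s • h) h)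
      (fderiv ℝ (fderiv ℝ f) (x + t • h) h h) t := by
    have := hp'.clm_apply (hasDerivAt_const t h)
    simpa using this
  have e2 : iteratedFDeriv ℝ 2 f (x + t • h) (fun _ => h)
      = fderiv ℝ (fderiv ℝ f) (x + t • h) h h :=
    iteratedFDeriv_two_apply f _ (fun _ => h)
  have hI2d : DifferentiableAt ℝ (iteratedFDeriv ℝ 2 f) (x + t • h) := by
    have hdo : DifferentiableOn ℝ (iteratedFDerivWithin ℝ 2 f U) U :=
      hfC.differentiableOn_iteratedFDerivWithin (by norm_num) hU.uniqueDiffOn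
    have hev : iteratedFDerivWithin ℝ 2 f U =ᶠ[nhds (x + t • h)] iteratedFDeriv ℝ 2 f :=
      Filter.eventuallyEq_of_mem (hU.mem_nhds hmem)
        (fun y hy => iteratedFDerivWithin_of_isOpen 2 hU hy)
    exact hev.differentiableAt_iff.mp
      ((hdo _ hmem).differentiableAt (hU.mem_nhds hmem))
  have hA' : HasDerivAt (fun s : ℝ => iteratedFDeriv ℝ 2 f (x + s • h))
      (fderiv ℝ (iteratedFDeriv ℝ 2 f) (x + t • h) h) t :=
    hI2d.hasFDerivAt.comp_hasDerivAt t (hline t)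
  have hA : HasDerivAt (fun s : ℝ => iteratedFDeriv ℝ 2 f (x + s • h) (fun _ => h))
      ((fderiv ℝ (iteratedFDeriv ℝ 2 f) (x + t • h) h) (fun _ => h)) t := by
    have := (ContinuousMultilinearMap.apply ℝ (fun _ : Fin 2 => E) ℝ
      (fun _ => h)).hasFDerivAt.comp_hasDerivAt t hA'
    exact this
  refine ⟨hφ, ?_, ?_⟩
  · rw [e2]; exact hp
  · have e3 : iteratedFDeriv ℝ 3 f (x + t • h) (fun _ => h)
        = (fderiv ℝ (iteratedFDeriv ℝ 2 f) (x + t • h) h) (fun _ => h) := rfl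
    rw [e3]; exact hA

noncomputable def lineF (f : E → ℝ) (x h : E) (r : ℝ) : ℝ → ℝ :=
  fun t => fderiv ℝ f (x + t • h) h + r * Real.sqrt (affMetric f (x + t • h) h)

noncomputable def lineDF (f : E → ℝ) (x h : E) (r : ℝ) : ℝ → ℝ :=
  fun t => iteratedFDeriv ℝ 2 f (x + t • h) (fun _ => h) +
    r * ((iteratedFDeriv ℝ 3 f (x + t • h) (fun _ => h) -
      2 * fderiv ℝ f (x + t • h) h * iteratedFDeriv ℝ 2 f (x + t • h) (fun _ => h)) /
      (2 * Real.sqrt (affMetric f (x + t • h) h)))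

lemma lineF_hasDeriv {U : Set E} (hU : IsOpen U) {f : E → ℝ} (hfC : ContDiffOn ℝ 3 f U)
    (x h : E) (r : ℝ) {t : ℝ} (hmem : x + t • h ∈ U)
    (hG : 0 < affMetric f (x + t • h) h) :
    HasDerivAt (lineF f x h r) (lineDF f x h r t) t := by
  obtain ⟨-, hp, hA⟩ := pack hU hfC x h hmem
  have hGd : HasDerivAt (fun s : ℝ => affMetric f (x + s • h) h)
      (iteratedFDeriv ℝ 3 f (x + t • h) (fun _ => h) -
        2 * fderiv ℝ f (x + t • h) h * iteratedFDeriv ℝ 2 f (x + t • h) (fun _ => h)) t := by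
    have := hA.sub (hp.pow 2)
    have e : iteratedFDeriv ℝ 3 f (x + t • h) (fun _ => h) -
        2 * fderiv ℝ f (x + t • h) h * iteratedFDeriv ℝ 2 f (x + t • h) (fun _ => h)
        = iteratedFDeriv ℝ 3 f (x + t • h) (fun _ => h) -
          2 * fderiv ℝ f (x + t • h) h ^ (2-1) * iteratedFDeriv ℝ 2 f (x + t • h) (fun _ => h) := by
      norm_num
    rw [e]
    exact this
  have hVd : HasDerivAt (fun s : ℝ => Real.sqrt (affMetric f (x + s • h) h))
      ((iteratedFDeriv ℝ 3 f (x + t • h) (fun _ => h) -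
        2 * fderiv ℝ f (x + t • h) h * iteratedFDeriv ℝ 2 f (x + t • h) (fun _ => h)) /
        (2 * Real.sqrt (affMetric f (x + t • h) h))) t := by
    have := (Real.hasDerivAt_sqrt (ne_of_gt hG)).comp t hGd
    have e : (iteratedFDeriv ℝ 3 f (x + t • h) (fun _ => h) -
        2 * fderiv ℝ f (x + t • h) h * iteratedFDeriv ℝ 2 f (x + t • h) (fun _ => h)) /
        (2 * Real.sqrt (affMetric f (x + t • h) h))
        = 1 / (2 * Real.sqrt (affMetric f (x + t • h) h)) *
          (iteratedFDeriv ℝ 3 f (x + t • h) (fun _ => h) -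
            2 * fderiv ℝ f (x + t • h) h * iteratedFDeriv ℝ 2 f (x + t • h) (fun _ => h)) := by
      ring
    rw [e]
    exact this
  exact hp.add (hVd.const_mul r)

lemma lineF_low_sq {ν : ℝ} (hν : 2 ≤ ν) {f : E → ℝ} {x h : E} {t : ℝ}
    (hG : 0 < affMetric f (x + t • h) h)
    (hpsc : |cubicForm f (x + t • h) h| ≤
      2 * ((ν-2)/Real.sqrt (ν-1)) * (affMetric f (x + t • h) h) ^ ((3:ℝ)/2)) :
    (lineF f x h (Real.sqrt (ν-1))⁻¹ t)^2 ≤ lineDF f x h (Real.sqrt (ν-1))⁻¹ t := by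
  exact ineq_low hν hG rfl hpsc

lemma lineF_up_sq {ν : ℝ} (hν : 2 ≤ ν) {f : E → ℝ} {x h : E} {t : ℝ}
    (hG : 0 < affMetric f (x + t • h) h)
    (hpsc : |cubicForm f (x + t • h) h| ≤
      2 * ((ν-2)/Real.sqrt (ν-1)) * (affMetric f (x + t • h) h) ^ ((3:ℝ)/2)) :
    lineDF f x h (Real.sqrt (ν-1)) t ≤ (lineF f x h (Real.sqrt (ν-1)) t)^2 := by
  exact ineq_up hν hG rfl hpsc

lemma sInf_all {X : Set E} (x h : E) (hall : ∀ t : ℝ, 0 < t → x + t • h ∈ X) :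
    sigmaDist X x h = 0 := by
  have hset : {r : ℝ | ∃ t : ℝ, 0 < t ∧ x + t • h ∈ X ∧ r = 1/t} = Set.Ioi 0 := by
    ext r
    constructor
    · rintro ⟨t, ht, -, rfl⟩
      exact one_div_pos.mpr ht
    · intro hr
      exact ⟨1/r, one_div_pos.mpr hr, hall _ (one_div_pos.mpr hr), (one_div_one_div r).symm⟩
  rw [sigmaDist, hset, csInf_Ioi]
theorem stmt_9 {n : ℕ} (X : Set (EuclideanSpace ℝ (Fin n)))
    (hX : IsRegularConvex X) (ν : ℝ) (hν : 2 ≤ ν)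
    (f : EuclideanSpace ℝ (Fin n) → ℝ)
    (hf : IsPSCBarrier X f ((ν - 2)/Real.sqrt (ν - 1)))
    (x : EuclideanSpace ℝ (Fin n)) (hx : x ∈ interior X) :
    ∀ h : EuclideanSpace ℝ (Fin n),
      max 0 (fderiv ℝ f x h + Real.sqrt (affMetric f x h / (ν - 1))) ≤ sigmaDist X x h ∧
      sigmaDist X x h ≤ max 0 (fderiv ℝ f x h + Real.sqrt ((ν - 1) * affMetric f x h)) := by
  intro h
  obtain ⟨hXc, hXconv, -, -⟩ := hX
  obtain ⟨hfC, hGpos, hbl, hpsc⟩ := hf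
  have hUopen : IsOpen (interior X) := isOpen_interior
  by_cases hne : h = 0
  · -- trivial case h = 0
    subst hne
    have hσ : sigmaDist X x (0 : EuclideanSpace ℝ (Fin n)) = 0 := by
      apply sInf_all
      intro t ht
      simpa using interior_subset hx
    have hm : affMetric f x (0 : EuclideanSpace ℝ (Fin n)) = 0 := by
      rw [affMetric]
      have h1 : iteratedFDeriv ℝ 2 f x (fun _ => (0 : EuclideanSpace ℝ (Fin n))) = 0 :=
        (iteratedFDeriv ℝ 2 f x).map_coord_zero (0 : Fin 2) rfl
      simp [h1]
    rw [hσ, hm]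
    norm_num
  -- main case
  have hb : 0 < Real.sqrt (ν - 1) := Real.sqrt_pos.mpr (by linarith)
  set b := Real.sqrt (ν - 1) with hbdef
  have hGx : 0 < affMetric f x h := hGpos x hx h hne
  -- rewriting the two endpoint expressions
  have hx0 : x + (0:ℝ) • h = x := by simp
  have hrewl : fderiv ℝ f x h + Real.sqrt (affMetric f x h / (ν - 1)) = lineF f x h b⁻¹ 0 := by
    rw [lineF]
    rw [hx0]
    have h1 : Real.sqrt (affMetric f x h / (ν - 1)) = Real.sqrt (affMetric f x h) / b := by
      rw [Real.sqrt_div hGx.le]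
    rw [h1, div_eq_mul_inv, mul_comm]
  have hrewu : fderiv ℝ f x h + Real.sqrt ((ν - 1) * affMetric f x h) = lineF f x h b 0 := by
    rw [lineF]
    rw [hx0]
    have h1 : Real.sqrt ((ν - 1) * affMetric f x h) = b * Real.sqrt (affMetric f x h) := by
      rw [Real.sqrt_mul (by linarith : (0:ℝ) ≤ ν - 1)]
    rw [h1]
  -- the set S of admissible times
  set S := {t : ℝ | 0 ≤ t ∧ x + t • h ∈ X} with hSdef
  have hS0 : (0:ℝ) ∈ S := ⟨le_rfl, by simpa using interior_subset hx⟩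
  have hSconv : Convex ℝ S := by
    intro t₁ ht₁ t₂ ht₂ α β hα hβ hαβ
    constructor
    · have := add_nonneg (mul_nonneg hα ht₁.1) (mul_nonneg hβ ht₂.1)
      simpa [smul_eq_mul] using this
    · have hXm := hXconv ht₁.2 ht₂.2 hα hβ hαβ
      have he : α • (x + t₁ • h) + β • (x + t₂ • h) = (α + β) • x + (α * t₁ + β * t₂) • h := by
        module
      rw [he, hαβ, one_smul] at hXm
      simpa [smul_eq_mul] using hXm
  have hSclosed : IsClosed S := by
    have hcont : Continuous (fun t : ℝ => x + t • h) :=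
      continuous_const.add (continuous_id.smul continuous_const)
    exact isClosed_Ici.inter (hXc.preimage hcont)
  -- a positive element of S
  obtain ⟨δ, hδ, hball⟩ := Metric.mem_nhds_iff.mp (mem_interior_iff_mem_nhds.mp hx)
  have hh : 0 < ‖h‖ := norm_pos_iff.mpr hne
  set ε₀ := δ / (2 * ‖h‖) with hε₀def
  have hε₀ : 0 < ε₀ := by positivity
  have hεS : ε₀ ∈ S := by
    refine ⟨hε₀.le, hball ?_⟩
    rw [Metric.mem_ball, dist_eq_norm]
    have he : x + ε₀ • h - x = ε₀ • h := by abel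
    rw [he, norm_smul, Real.norm_eq_abs, abs_of_pos hε₀]
    have : ε₀ * ‖h‖ = δ / 2 := by
      rw [hε₀def]; field_simp
    rw [this]; linarith
  -- membership in the interior along the segment
  have hmemU : ∀ t : ℝ, 0 ≤ t → (∃ u, u ∈ S ∧ t < u) → x + t • h ∈ interior X := by
    rintro t ht ⟨u, huS, htu⟩
    rcases eq_or_lt_of_le ht with heq | htpos
    · rw [← heq]; simpa using hx
    · have hu0 : 0 < u := lt_trans htpos htu
      have hune : u ≠ 0 := ne_of_gt hu0
      have hcombo := hXconv.combo_interior_self_mem_interior hx huS.2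
        (a := 1 - t/u) (b := t/u)
        (by have := (div_lt_one hu0).mpr htu; linarith)
        (by positivity) (by ring)
      have heq2 : (1 - t/u) • x + (t/u) • (x + u • h) = x + t • h := by
        have h1 : (1 - t/u) • x + (t/u) • (x + u • h)
            = ((1 - t/u) + t/u) • x + ((t/u) * u) • h := by module
        rw [h1, sub_add_cancel, one_smul, div_mul_cancel₀ _ hune]
      rw [heq2] at hcombo
      exact hcombo
  by_cases hbdd : BddAbove S
  · -- bounded case: T := sSup S finite
    set T := sSup S with hTdef
    have hTS : T ∈ S := hSclosed.csSup_mem ⟨0, hS0⟩ hbdd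
    have hT0 : 0 < T := lt_of_lt_of_le hε₀ (le_csSup hbdd hεS)
    have hmemIco : ∀ t ∈ Set.Ico 0 T, x + t • h ∈ interior X := by
      intro t ht
      exact hmemU t ht.1 (by
        obtain ⟨u, huS, htu⟩ := exists_lt_of_lt_csSup ⟨0, hS0⟩ ht.2
        exact ⟨u, huS, htu⟩)
    -- sigma = 1/T
    have hσ : sigmaDist X x h = 1/T := by
      rw [sigmaDist]
      have hmemT : (1/T) ∈ {r : ℝ | ∃ t : ℝ, 0 < t ∧ x + t • h ∈ X ∧ r = 1/t} :=
        ⟨T, hT0, hTS.2, rfl⟩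
      have hbb : BddBelow {r : ℝ | ∃ t : ℝ, 0 < t ∧ x + t • h ∈ X ∧ r = 1/t} := by
        refine ⟨0, ?_⟩
        rintro r ⟨t, ht, -, rfl⟩
        positivity
      refine le_antisymm (csInf_le hbb hmemT) (le_csInf ⟨_, hmemT⟩ ?_)
      rintro r ⟨t, ht0, htX, rfl⟩
      exact one_div_le_one_div_of_le ht0 (le_csSup hbdd ⟨ht0.le, htX⟩)
    -- frontier point
    have hfr : x + T • h ∈ frontier X := by
      have hmemX : x + T • h ∈ closure X := subset_closure hTS.2
      have hnotU : x + T • h ∉ interior X := by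
        intro hmem
        obtain ⟨δ', hδ', hball'⟩ := Metric.mem_nhds_iff.mp (hUopen.mem_nhds hmem)
        set ε' := δ' / (2 * ‖h‖) with hε'def
        have hε' : 0 < ε' := by positivity
        have hTε : T + ε' ∈ S := by
          refine ⟨by linarith, interior_subset (hball' ?_)⟩
          rw [Metric.mem_ball, dist_eq_norm]
          have he : x + (T + ε') • h - (x + T • h) = ε' • h := by
            rw [add_smul]; abel
          rw [he, norm_smul, Real.norm_eq_abs, abs_of_pos hε']
          have : ε' * ‖h‖ = δ' / 2 := by rw [hε'def]; field_simp
          rw [this]; linarith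
        have := le_csSup hbdd hTε
        linarith
      exact ⟨hmemX, hnotU⟩
    -- blow-up of f along the segment
    haveI hNB : (nhdsWithin T (Set.Ioo 0 T)).NeBot := by
      apply mem_closure_iff_nhdsWithin_neBot.mp
      rw [closure_Ioo hT0.ne]
      exact ⟨hT0.le, le_rfl⟩
    have hblow : Tendsto (fun t : ℝ => f (x + t • h)) (nhdsWithin T (Set.Ioo 0 T)) atTop := by
      apply (hbl _ hfr).comp
      apply tendsto_nhdsWithin_of_tendsto_nhds_of_eventually_within
      · have hcont : Continuous (fun t : ℝ => x + t • h) :=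
          continuous_const.add (continuous_id.smul continuous_const)
        exact (hcont.tendsto T).mono_left (nhdsWithin_le_nhds (s := Set.Ioo 0 T))
      · exact Filter.eventually_of_mem self_mem_nhdsWithin
          (fun t ht => hmemIco t ⟨ht.1.le, ht.2⟩)
    -- p is unbounded on [0,T)
    have hp_unbdd : ∀ M : ℝ, ∃ t ∈ Set.Ico 0 T, M < fderiv ℝ f (x + t • h) h := by
      intro M
      by_contra hno
      push_neg at hno
      have hφb : ∀ t ∈ Set.Ico 0 T, f (x + t • h) ≤ f x + M * t := by
        intro t ht
        have hmono := myMono (g := fun s : ℝ => M * s - f (x + s • h))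
          (g' := fun s : ℝ => M - fderiv ℝ f (x + s • h) h) ht.1
          (fun u hu => by
            have hd := ((hasDerivAt_id u).const_mul M).sub
              (pack hUopen hfC x h (hmemIco u ⟨hu.1, lt_of_le_of_lt hu.2 ht.2⟩)).1
            simp only [id, mul_one] at hd
            exact hd)
          (fun u hu => sub_nonneg.mpr (hno u ⟨hu.1, lt_of_le_of_lt hu.2 ht.2⟩))
        simp only [mul_zero, zero_sub, hx0] at hmono
        linarith
      have hev := hblow.eventually (Filter.eventually_gt_atTop (f x + |M| * T))
      obtain ⟨t, hgt, htmem⟩ := (hev.and eventually_mem_nhdsWithin).exists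
      have hc1 := hφb t ⟨htmem.1.le, htmem.2⟩
      have hc2 : M * t ≤ |M| * T := by
        nlinarith [le_abs_self M, abs_nonneg M, htmem.1.le, htmem.2.le, hT0]
      have hgt : f (x + t • h) > f x + |M| * T := hgt
      linarith
    -- p is monotone on [0,T)
    have hp_mono : ∀ s t : ℝ, s ∈ Set.Ico 0 T → t ∈ Set.Ico 0 T → s ≤ t →
        fderiv ℝ f (x + s • h) h ≤ fderiv ℝ f (x + t • h) h := by
      intro s t hs ht hst
      apply myMono (g := fun u : ℝ => fderiv ℝ f (x + u • h) h)
        (g' := fun u : ℝ => iteratedFDeriv ℝ 2 f (x + u • h) (fun _ => h)) hst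
      · intro u hu
        exact (pack hUopen hfC x h
          (hmemIco u ⟨le_trans hs.1 hu.1, lt_of_le_of_lt hu.2 ht.2⟩)).2.1
      · intro u hu
        have hmm := hmemIco u ⟨le_trans hs.1 hu.1, lt_of_le_of_lt hu.2 ht.2⟩
        have hg := hGpos _ hmm h hne
        rw [affMetric] at hg
        nlinarith [sq_nonneg (fderiv ℝ f (x + u • h) h)]
    -- unboundedness of the upper function
    have hub : ∀ M : ℝ, ∀ t₀ ∈ Set.Ico 0 T, ∃ t, t ∈ Set.Ico 0 T ∧ t₀ ≤ t ∧
        M ≤ lineF f x h b t := by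
      intro M t₀ ht₀
      obtain ⟨t₁, ht₁, hMt₁⟩ := hp_unbdd M
      refine ⟨max t₀ t₁, ⟨le_trans ht₀.1 (le_max_left _ _), max_lt ht₀.2 ht₁.2⟩,
        le_max_left _ _, ?_⟩
      have hple := hp_mono t₁ (max t₀ t₁) ht₁
        ⟨le_trans ht₁.1 (le_max_right _ _), max_lt ht₀.2 ht₁.2⟩ (le_max_right _ _)
      have hsq : 0 ≤ b * Real.sqrt (affMetric f (x + (max t₀ t₁) • h) h) :=
        mul_nonneg hb.le (Real.sqrt_nonneg _)
      have : lineF f x h b (max t₀ t₁)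
          = fderiv ℝ f (x + (max t₀ t₁) • h) h
            + b * Real.sqrt (affMetric f (x + (max t₀ t₁) • h) h) := rfl
      rw [this]
      linarith
    -- apply the Riccati lemmas
    have hlowB : lineF f x h b⁻¹ 0 ≤ 1/T := by
      apply riccati_lower hT0 (F' := lineDF f x h b⁻¹)
      · intro t ht
        exact lineF_hasDeriv hUopen hfC x h b⁻¹ (hmemIco t ht)
          (hGpos _ (hmemIco t ht) h hne)
      · intro t ht
        exact lineF_low_sq hν (hGpos _ (hmemIco t ht) h hne) (hpsc _ (hmemIco t ht) h)
    have hupB : 1/T ≤ lineF f x h b 0 := by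
      apply riccati_upper hT0 (F' := lineDF f x h b)
      · intro t ht
        exact lineF_hasDeriv hUopen hfC x h b (hmemIco t ht)
          (hGpos _ (hmemIco t ht) h hne)
      · intro t ht
        exact lineF_up_sq hν (hGpos _ (hmemIco t ht) h hne) (hpsc _ (hmemIco t ht) h)
      · exact hub
    rw [hσ]
    constructor
    · apply max_le (by positivity)
      rw [hrewl]
      exact hlowB
    · rw [hrewu]
      exact le_trans hupB (le_max_right _ _)
  · -- unbounded case: sigma = 0
    have hallS : ∀ t : ℝ, 0 ≤ t → t ∈ S := by
      intro t ht
      obtain ⟨u, huS, htu⟩ := not_bddAbove_iff.mp hbdd t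
      exact hSconv.ordConnected.out hS0 huS ⟨ht, htu.le⟩
    have hσ : sigmaDist X x h = 0 :=
      sInf_all x h (fun t ht => (hallS t ht.le).2)
    have hallU : ∀ t : ℝ, 0 ≤ t → x + t • h ∈ interior X := by
      intro t ht
      exact hmemU t ht ⟨t + 1, hallS (t+1) (by linarith), by linarith⟩
    have hFle : ∀ T' : ℝ, 0 < T' → lineF f x h b⁻¹ 0 ≤ 1/T' := by
      intro T' hT'
      apply riccati_lower hT' (F' := lineDF f x h b⁻¹)
      · intro t ht
        exact lineF_hasDeriv hUopen hfC x h b⁻¹ (hallU t ht.1)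
          (hGpos _ (hallU t ht.1) h hne)
      · intro t ht
        exact lineF_low_sq hν (hGpos _ (hallU t ht.1) h hne) (hpsc _ (hallU t ht.1) h)
    have hF0 : lineF f x h b⁻¹ 0 ≤ 0 := by
      by_contra hpos'
      push_neg at hpos'
      have h1 := hFle (2 / lineF f x h b⁻¹ 0) (by positivity)
      rw [one_div_div] at h1
      linarith
    rw [hσ]
    constructor
    · apply max_le le_rfl
      rw [hrewl]
      exact hF0
    · exact le_max_left _ _
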